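/- Let n > 1 be odd. In the graded ring H = ℤ[x₁,x₂]/⟨x₁ⁿ(x₁+2x₂), x₂(x₁+x₂)⟩, for all integers c, d one has (c·x₁ + d·x₂)^(n+1) = (c^(n+1) + (d−c)^(n+1))·x₂^(n+1), and consequently (c·x₁+d·x₂)^(n+1) = 0 implies c = d = 0. -/

import Mathlib

set_option maxHeartbeats 1000000

open MvPolynomial

lemma aux_addpow {Q : Type*} [CommRing Q] (a b : Q) (h : a * b = 0) :
    ∀ m : ℕ, (a + b) ^ (m + 1) = a ^ (m + 1) + b ^ (m + 1) := by
  intro m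
  induction m with
  | zero => simp
  | succ k ih =>
      have hb : a * b ^ (k + 1) = 0 := by
        rw [pow_succ', ← mul_assoc, h, zero_mul]
      have ha : b * a ^ (k + 1) = 0 := by
        rw [pow_succ', ← mul_assoc, mul_comm b a, h, zero_mul]
      calc (a + b) ^ (k + 1 + 1) = (a + b) * (a + b) ^ (k + 1) := by ring
        _ = (a + b) * (a ^ (k + 1) + b ^ (k + 1)) := by rw [ih]
        _ = a ^ (k + 1 + 1) + (a * b ^ (k + 1) + b * a ^ (k + 1)) + b ^ (k + 1 + 1) := by
            ring
        _ = a ^ (k + 1 + 1) + b ^ (k + 1 + 1) := by rw [hb, ha]; ring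

lemma aux_main {Q : Type*} [CommRing Q] (n : ℕ) (hodd : Odd n) (x y cc dd : Q)
    (h1 : x ^ n * (x + 2 * y) = 0) (h2 : y * (x + y) = 0) :
    (cc * x + dd * y) ^ (n + 1) = (cc ^ (n + 1) + (dd - cc) ^ (n + 1)) * y ^ (n + 1) := by
  have hyp2 : (x + y) ^ 2 = x * (x + y) := by
    have h' : (x + y) ^ 2 = x * (x + y) + y * (x + y) := by ring
    rw [h', h2, add_zero]
  have hypk : ∀ k : ℕ, (x + y) ^ (k + 1) = x ^ k * (x + y) := by
    intro k
    induction k with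
    | zero => simp
    | succ m ih =>
        calc (x + y) ^ (m + 1 + 1) = (x + y) ^ (m + 1) * (x + y) := by ring
          _ = x ^ m * (x + y) * (x + y) := by rw [ih]
          _ = x ^ m * (x + y) ^ 2 := by ring
          _ = x ^ m * (x * (x + y)) := by rw [hyp2]
          _ = x ^ (m + 1) * (x + y) := by ring
  have hy2 : y ^ 2 = -x * y := by
    have h' : y ^ 2 = -x * y + y * (x + y) := by ring
    rw [h', h2, add_zero]
  have hyk : ∀ k : ℕ, y ^ (k + 1) = (-x) ^ k * y := by
    intro k
    induction k with
    | zero => simp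
    | succ m ih =>
        calc y ^ (m + 1 + 1) = y ^ (m + 1) * y := by ring
          _ = (-x) ^ m * y * y := by rw [ih]
          _ = (-x) ^ m * y ^ 2 := by ring
          _ = (-x) ^ m * (-x * y) := by rw [hy2]
          _ = (-x) ^ (m + 1) * y := by ring
  have hxny : x ^ n * (x + y) = -(x ^ n * y) := by
    have h' : x ^ n * (x + y) = -(x ^ n * y) + x ^ n * (x + 2 * y) := by ring
    rw [h', h1, add_zero]
  have htop1 : (x + y) ^ (n + 1) = -(x ^ n * y) := by rw [hypk n, hxny]
  have htop2 : y ^ (n + 1) = -(x ^ n * y) := by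
    rw [hyk n, hodd.neg_pow]
    ring
  have htops : (x + y) ^ (n + 1) = y ^ (n + 1) := by rw [htop1, htop2]
  have hcross : (cc * (x + y)) * ((dd - cc) * y) = 0 := by
    have h' : (cc * (x + y)) * ((dd - cc) * y) = cc * (dd - cc) * (y * (x + y)) := by ring
    rw [h', h2, mul_zero]
  calc (cc * x + dd * y) ^ (n + 1) = (cc * (x + y) + (dd - cc) * y) ^ (n + 1) := by ring_nf
    _ = (cc * (x + y)) ^ (n + 1) + ((dd - cc) * y) ^ (n + 1) := aux_addpow _ _ hcross n
    _ = cc ^ (n + 1) * (x + y) ^ (n + 1) + (dd - cc) ^ (n + 1) * y ^ (n + 1) := by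
        rw [mul_pow, mul_pow]
    _ = cc ^ (n + 1) * y ^ (n + 1) + (dd - cc) ^ (n + 1) * y ^ (n + 1) := by rw [htops]
    _ = (cc ^ (n + 1) + (dd - cc) ^ (n + 1)) * y ^ (n + 1) := by ring

lemma aux_evalzero (v : Fin 2 → Polynomial ℤ) (p : MvPolynomial (Fin 2) ℤ) :
    Polynomial.eval 0 (aeval v p) = eval (fun i => Polynomial.eval 0 (v i)) p := by
  induction p using MvPolynomial.induction_on with
  | C a => simp
  | add p q hp hq => simp [hp, hq]
  | mul_X p i hp => simp [hp]

theorem stmt3 (n : ℕ) (hn : 1 < n) (hodd : Odd n) (c d : ℤ) :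
    (Ideal.Quotient.mk
        (Ideal.span {(X 0 : MvPolynomial (Fin 2) ℤ) ^ n * (X 0 + 2 * X 1), X 1 * (X 0 + X 1)})
        (C c * X 0 + C d * X 1)) ^ (n + 1) =
      Ideal.Quotient.mk
        (Ideal.span {(X 0 : MvPolynomial (Fin 2) ℤ) ^ n * (X 0 + 2 * X 1), X 1 * (X 0 + X 1)})
        (C (c ^ (n + 1) + (d - c) ^ (n + 1)) * X 1 ^ (n + 1)) ∧
    ((Ideal.Quotient.mk
        (Ideal.span {(X 0 : MvPolynomial (Fin 2) ℤ) ^ n * (X 0 + 2 * X 1), X 1 * (X 0 + X 1)})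
        (C c * X 0 + C d * X 1)) ^ (n + 1) = 0 → c = 0 ∧ d = 0) := by
  set g1 : MvPolynomial (Fin 2) ℤ := (X 0) ^ n * (X 0 + 2 * X 1) with hg1
  set g2 : MvPolynomial (Fin 2) ℤ := X 1 * (X 0 + X 1) with hg2
  set I : Ideal (MvPolynomial (Fin 2) ℤ) := Ideal.span {g1, g2} with hI
  set f := Ideal.Quotient.mk I with hf
  have hmem1 : g1 ∈ I := Ideal.subset_span (Set.mem_insert _ _)
  have hmem2 : g2 ∈ I := Ideal.subset_span (Set.mem_insert_of_mem _ rfl)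
  have h1 : f (X 0) ^ n * (f (X 0) + 2 * f (X 1)) = 0 := by
    have h0 : f g1 = 0 := (Ideal.Quotient.eq_zero_iff_mem).2 hmem1
    rw [hg1, map_mul, map_pow, map_add, map_mul, map_ofNat] at h0
    exact h0
  have h2 : f (X 1) * (f (X 0) + f (X 1)) = 0 := by
    have h0 : f g2 = 0 := (Ideal.Quotient.eq_zero_iff_mem).2 hmem2
    rw [hg2, map_mul, map_add] at h0
    exact h0
  have hmain : (f (C c * X 0 + C d * X 1)) ^ (n + 1) =
      f (C (c ^ (n + 1) + (d - c) ^ (n + 1)) * X 1 ^ (n + 1)) := by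
    have e := aux_main n hodd (f (X 0)) (f (X 1)) (f (C c)) (f (C d)) h1 h2
    have l : f (C c * X 0 + C d * X 1) = f (C c) * f (X 0) + f (C d) * f (X 1) := by
      rw [map_add, map_mul, map_mul]
    have r : f (C (c ^ (n + 1) + (d - c) ^ (n + 1)) * X 1 ^ (n + 1)) =
        (f (C c) ^ (n + 1) + (f (C d) - f (C c)) ^ (n + 1)) * f (X 1) ^ (n + 1) := by
      rw [map_mul, map_pow, C_add, map_add, C_pow, map_pow, C_pow, map_pow, C_sub, map_sub]
    rw [l, r, e]
  refine ⟨hmain, ?_⟩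
  intro h0
  rw [hmain] at h0
  have hmemI : C (c ^ (n + 1) + (d - c) ^ (n + 1)) * X 1 ^ (n + 1) ∈ I :=
    (Ideal.Quotient.eq_zero_iff_mem).1 h0
  set m := c ^ (n + 1) + (d - c) ^ (n + 1) with hm
  rw [hI] at hmemI
  obtain ⟨a, b, hab⟩ := Ideal.mem_span_pair.1 hmemI
  have hn1 : (n + 1) ≠ 0 := Nat.succ_ne_zero n
  set v1 : Fin 2 → Polynomial ℤ := ![-Polynomial.X, Polynomial.X] with hv1
  set v2 : Fin 2 → Polynomial ℤ := ![Polynomial.X, 0] with hv2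
  have key1 : (aeval v1) g1 = -(Polynomial.X ^ (n + 1)) := by
    rw [hg1]
    simp [hv1, hodd.neg_pow]
    ring
  have key1' : (aeval v1) g2 = 0 := by
    rw [hg2]
    simp [hv1]
  have key1'' : (aeval v1) (C m * X 1 ^ (n + 1)) =
      (m : Polynomial ℤ) * Polynomial.X ^ (n + 1) := by
    simp [hv1, algebraMap_int_eq]
  have e1 : (aeval v1) a * (aeval v1) g1 + (aeval v1) b * (aeval v1) g2 =
      (aeval v1) (C m * X 1 ^ (n + 1)) := by
    rw [← map_mul, ← map_mul, ← map_add, hab]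
  rw [key1, key1', key1'', mul_zero, add_zero] at e1
  have ea1 : (aeval v1) a = -(m : Polynomial ℤ) := by
    have hz : ((aeval v1) a + (m : Polynomial ℤ)) * Polynomial.X ^ (n + 1) = 0 := by
      linear_combination -e1
    rcases mul_eq_zero.1 hz with h | h
    · exact eq_neg_of_add_eq_zero_left h
    · exact absurd h (pow_ne_zero _ Polynomial.X_ne_zero)
  have key2 : (aeval v2) g1 = Polynomial.X ^ (n + 1) := by
    rw [hg1]
    simp [hv2]
    ring
  have key2' : (aeval v2) g2 = 0 := by
    rw [hg2]
    simp [hv2]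
  have key2'' : (aeval v2) (C m * X 1 ^ (n + 1)) = 0 := by
    simp [hv2, zero_pow hn1]
  have e2 : (aeval v2) a * (aeval v2) g1 + (aeval v2) b * (aeval v2) g2 =
      (aeval v2) (C m * X 1 ^ (n + 1)) := by
    rw [← map_mul, ← map_mul, ← map_add, hab]
  rw [key2, key2', key2'', mul_zero, add_zero] at e2
  have ea2 : (aeval v2) a = 0 :=
    (mul_eq_zero.1 e2).resolve_right (pow_ne_zero _ Polynomial.X_ne_zero)
  have hw : (fun i => Polynomial.eval 0 (v1 i)) = (fun i => Polynomial.eval 0 (v2 i)) := by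
    funext i
    fin_cases i <;> simp [hv1, hv2]
  have hm0 : m = 0 := by
    have q1 := aux_evalzero v1 a
    have q2 := aux_evalzero v2 a
    rw [ea1] at q1
    rw [ea2] at q2
    rw [hw] at q1
    rw [← q2] at q1
    simpa using q1.symm
  have heven : Even (n + 1) := hodd.add_one
  have hc0 : c ^ (n + 1) = 0 ∧ (d - c) ^ (n + 1) = 0 := by
    constructor <;> nlinarith [heven.pow_nonneg c, heven.pow_nonneg (d - c), hm0, hm]
  have hc : c = 0 := (pow_eq_zero_iff hn1).1 hc0.1
  have hd : d = 0 := by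
    have hdc := (pow_eq_zero_iff hn1).1 hc0.2
    omega
  exact ⟨hc, hd⟩
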